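/- Let q ∈ ℂ, q ≠ 0, q² ≠ 1, and let (m_j) satisfy m_{j+1} = [2]m_j - m_{j-1} with [2] = q + q^{-1}, together with the quadratic relation m_1² - [2]m_0 m_1 + m_0² - 1 = 0. If m_k = m_0 for some integer k > 0 and q^k ≠ 1, then (2 - q^k - q^{-k})·m_0² = [k]², and hence m_0² = -[k/2]₊² in the sense that m_0² = [k]²/(2 - q^k - q^{-k}). -/

import Mathlib

noncomputable def qint (q : ℂ) (n : ℤ) : ℂ := (q ^ n - q ^ (-n)) / (q - q⁻¹)

theorem period_implies (q : ℂ) (hq : q ≠ 0) (hq2 : q ^ 2 ≠ 1)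
    (m : ℕ → ℂ)
    (hquad : m 1 ^ 2 - (q + q⁻¹) * m 0 * m 1 + m 0 ^ 2 - 1 = 0)
    (hrec : ∀ j : ℕ, m (j + 2) = (q + q⁻¹) * m (j + 1) - m j)
    (k : ℕ) (hk : 0 < k) (hper : m k = m 0) (hqk : q ^ k ≠ 1) :
    (2 - q ^ k - (q ^ k)⁻¹) * m 0 ^ 2 = qint q k ^ 2 := by
  have hqi : q * q⁻¹ = 1 := mul_inv_cancel₀ hq
  have hd : q - q⁻¹ ≠ 0 := by
    intro h
    exact hq2 (by linear_combination q * h + hqi)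
  set A := (m 1 - m 0 * q⁻¹) / (q - q⁻¹) with hA
  set B := (m 0 * q - m 1) / (q - q⁻¹) with hB
  have h0 : m 0 = A + B := by
    rw [hA, hB, ← add_div,
      show m 1 - m 0 * q⁻¹ + (m 0 * q - m 1) = m 0 * (q - q⁻¹) by ring,
      mul_div_assoc, div_self hd, mul_one]
  have h1 : m 1 = A * q + B * q⁻¹ := by
    rw [hA, hB, div_mul_eq_mul_div, div_mul_eq_mul_div, ← add_div,
      show (m 1 - m 0 * q⁻¹) * q + (m 0 * q - m 1) * q⁻¹ = m 1 * (q - q⁻¹) by ring,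
      mul_div_assoc, div_self hd, mul_one]
  have hcf : ∀ j, m j = A * q ^ j + B * q⁻¹ ^ j := by
    intro j
    induction j using Nat.twoStepInduction with
    | zero => simpa using h0
    | one => simpa using h1
    | more n ih1 ih2 =>
      rw [hrec n, ih2, ih1]
      linear_combination (A * q ^ n + B * q⁻¹ ^ n) * hqi
  set c := q ^ k with hc
  have hc0 : c ≠ 0 := pow_ne_zero k hq
  have hcc : c * c⁻¹ = 1 := mul_inv_cancel₀ hc0
  have hci : q⁻¹ ^ k = c⁻¹ := by rw [inv_pow]
  have hper' : A * c + B * c⁻¹ = A + B := by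
    rw [← hci, ← h0, ← hcf k]; exact hper
  have hB' : B = A * c := by
    have h1' : (A * c - B) * (c - 1) = 0 := by
      linear_combination c * hper' - B * hcc
    rcases mul_eq_zero.mp h1' with h | h
    · linear_combination -h
    · exact absurd (by linear_combination h) hqk
  have hAB : A * B * (q - q⁻¹) ^ 2 = -1 := by
    rw [h0, h1] at hquad
    linear_combination -hquad - (A + B) ^ 2 * hqi
  rw [hB'] at hAB
  have key : A ^ 2 * c * (q - q⁻¹) ^ 2 = -1 := by linear_combination hAB
  have hqint : qint q k = (c - c⁻¹) / (q - q⁻¹) := by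
    rw [qint, zpow_neg, zpow_natCast, hc]
  rw [h0, hB', hqint, div_pow, eq_div_iff (pow_ne_zero 2 hd)]
  linear_combination ((2 - c - c⁻¹) * (1 + c) ^ 2 * c⁻¹) * key +
    (-(2 - c - c⁻¹) * (1 + c) ^ 2 * A ^ 2 * (q - q⁻¹) ^ 2 + (2 + c) * c⁻¹ + c ^ 2) * hcc
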